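/- Let $F$ be a field and $v_1,\dots,v_6 \in F^3$ such that all $3\times 3$ determinants $\Delta_{abc} = \det(v_a,v_b,v_c)$ for distinct $a,b,c \in \{1,\dots,6\}$ are nonzero. Then the seven-term $(3,6)$ irreducible decoupling identity holds: $-\dfrac{1}{\Delta_{123}\Delta_{146}\Delta_{156}\Delta_{234}\Delta_{256}\Delta_{345}} - \dfrac{\Delta_{235}}{\Delta_{123}\Delta_{125}\Delta_{146}\Delta_{234}\Delta_{256}\Delta_{345}\Delta_{356}} - \dfrac{1}{\Delta_{123}\Delta_{125}\Delta_{146}\Delta_{234}\Delta_{356}\Delta_{456}} + \dfrac{1}{\Delta_{123}\Delta_{125}\Delta_{156}\Delta_{234}\Delta_{346}\Delta_{456}} + \dfrac{1}{\Delta_{123}\Delta_{125}\Delta_{156}\Delta_{246}\Delta_{345}\Delta_{346}} + \dfrac{\Delta_{126}}{\Delta_{123}\Delta_{125}\Delta_{146}\Delta_{156}\Delta_{236}\Delta_{246}\Delta_{345}} + \dfrac{1}{\Delta_{125}\Delta_{146}\Delta_{156}\Delta_{234}\Delta_{236}\Delta_{345}} = 0$. -/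

import Mathlib

set_option maxHeartbeats 1000000
/-- `Δ_{abc}`: the determinant of the `3 × 3` matrix whose columns are `v a`, `v b`, `v c`. -/
def Δ3 {F : Type*} [Field F] {N : ℕ} (v : Fin N → Fin 3 → F) (a b c : Fin N) : F :=
  Matrix.det (Matrix.of fun i j => ![v a, v b, v c] j i)

/-- The seven-term `(3,6)` irreducible decoupling identity
(labels `1, …, 6` correspond to indices `0, …, 5`):
`-1/(Δ₁₂₃Δ₁₄₆Δ₁₅₆Δ₂₃₄Δ₂₅₆Δ₃₄₅) - Δ₂₃₅/(Δ₁₂₃Δ₁₂₅Δ₁₄₆Δ₂₃₄Δ₂₅₆Δ₃₄₅Δ₃₅₆)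
 - 1/(Δ₁₂₃Δ₁₂₅Δ₁₄₆Δ₂₃₄Δ₃₅₆Δ₄₅₆) + 1/(Δ₁₂₃Δ₁₂₅Δ₁₅₆Δ₂₃₄Δ₃₄₆Δ₄₅₆)
 + 1/(Δ₁₂₃Δ₁₂₅Δ₁₅₆Δ₂₄₆Δ₃₄₅Δ₃₄₆) + Δ₁₂₆/(Δ₁₂₃Δ₁₂₅Δ₁₄₆Δ₁₅₆Δ₂₃₆Δ₂₄₆Δ₃₄₅)
 + 1/(Δ₁₂₅Δ₁₄₆Δ₁₅₆Δ₂₃₄Δ₂₃₆Δ₃₄₅) = 0`. -/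

lemma aux312 {F : Type*} [Field F] (D : F) (hD : D ≠ 0) (w : Fin 6 → Fin 3 → F)
    (h0 : w 0 = ![1,0,0]) (h1 : w 1 = ![0,1,0]) (h2 : w 2 = ![0,0,1])
    (hΔ : ∀ a b c : Fin 6, a ≠ b → a ≠ c → b ≠ c → Δ3 w a b c ≠ 0) :
    -(D * Δ3 w 0 1 2 * (D * Δ3 w 0 3 5) * (D * Δ3 w 0 4 5) * (D * Δ3 w 1 2 3) * (D * Δ3 w 1 4 5) * (D * Δ3 w 2 3 4))⁻¹
      - D * Δ3 w 1 2 4 * (D * Δ3 w 0 1 2 * (D * Δ3 w 0 1 4) * (D * Δ3 w 0 3 5) * (D * Δ3 w 1 2 3) * (D * Δ3 w 1 4 5) * (D * Δ3 w 2 3 4) * (D * Δ3 w 2 4 5))⁻¹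
      - (D * Δ3 w 0 1 2 * (D * Δ3 w 0 1 4) * (D * Δ3 w 0 3 5) * (D * Δ3 w 1 2 3) * (D * Δ3 w 2 4 5) * (D * Δ3 w 3 4 5))⁻¹
      + (D * Δ3 w 0 1 2 * (D * Δ3 w 0 1 4) * (D * Δ3 w 0 4 5) * (D * Δ3 w 1 2 3) * (D * Δ3 w 2 3 5) * (D * Δ3 w 3 4 5))⁻¹
      + (D * Δ3 w 0 1 2 * (D * Δ3 w 0 1 4) * (D * Δ3 w 0 4 5) * (D * Δ3 w 1 3 5) * (D * Δ3 w 2 3 4) * (D * Δ3 w 2 3 5))⁻¹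
      + D * Δ3 w 0 1 5 * (D * Δ3 w 0 1 2 * (D * Δ3 w 0 1 4) * (D * Δ3 w 0 3 5) * (D * Δ3 w 0 4 5) * (D * Δ3 w 1 2 5) * (D * Δ3 w 1 3 5) * (D * Δ3 w 2 3 4))⁻¹
      + (D * Δ3 w 0 1 4 * (D * Δ3 w 0 3 5) * (D * Δ3 w 0 4 5) * (D * Δ3 w 1 2 3) * (D * Δ3 w 1 2 5) * (D * Δ3 w 2 3 4))⁻¹
      = 0 := by
  have e012 := hΔ 0 1 2 (by decide) (by decide) (by decide)
  have e014 := hΔ 0 1 4 (by decide) (by decide) (by decide)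
  have e015 := hΔ 0 1 5 (by decide) (by decide) (by decide)
  have e035 := hΔ 0 3 5 (by decide) (by decide) (by decide)
  have e045 := hΔ 0 4 5 (by decide) (by decide) (by decide)
  have e123 := hΔ 1 2 3 (by decide) (by decide) (by decide)
  have e124 := hΔ 1 2 4 (by decide) (by decide) (by decide)
  have e125 := hΔ 1 2 5 (by decide) (by decide) (by decide)
  have e135 := hΔ 1 3 5 (by decide) (by decide) (by decide)
  have e145 := hΔ 1 4 5 (by decide) (by decide) (by decide)
  have e234 := hΔ 2 3 4 (by decide) (by decide) (by decide)
  have e235 := hΔ 2 3 5 (by decide) (by decide) (by decide)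
  have e245 := hΔ 2 4 5 (by decide) (by decide) (by decide)
  have e345 := hΔ 3 4 5 (by decide) (by decide) (by decide)
  have hM : (D ^ 7 * (Δ3 w 0 1 2 * Δ3 w 0 1 4 * Δ3 w 0 1 5 * Δ3 w 0 3 5 * Δ3 w 0 4 5 * Δ3 w 1 2 3 * Δ3 w 1 2 4 * Δ3 w 1 2 5 * Δ3 w 1 3 5 * Δ3 w 1 4 5 * Δ3 w 2 3 4 * Δ3 w 2 3 5 * Δ3 w 2 4 5 * Δ3 w 3 4 5)) ≠ 0 := by
    exact mul_ne_zero (pow_ne_zero 7 hD) (mul_ne_zero (mul_ne_zero (mul_ne_zero (mul_ne_zero (mul_ne_zero (mul_ne_zero (mul_ne_zero (mul_ne_zero (mul_ne_zero (mul_ne_zero (mul_ne_zero (mul_ne_zero (mul_ne_zero e012 e014) e015) e035) e045) e123) e124) e125) e135) e145) e234) e235) e245) e345)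
  have hA : (D * Δ3 w 0 1 2 * (D * Δ3 w 0 3 5) * (D * Δ3 w 0 4 5) * (D * Δ3 w 1 2 3) * (D * Δ3 w 1 4 5) * (D * Δ3 w 2 3 4))⁻¹ = (D * (Δ3 w 0 1 4 * Δ3 w 0 1 5 * Δ3 w 1 2 4 * Δ3 w 1 2 5 * Δ3 w 1 3 5 * Δ3 w 2 3 5 * Δ3 w 2 4 5 * Δ3 w 3 4 5)) / (D ^ 7 * (Δ3 w 0 1 2 * Δ3 w 0 1 4 * Δ3 w 0 1 5 * Δ3 w 0 3 5 * Δ3 w 0 4 5 * Δ3 w 1 2 3 * Δ3 w 1 2 4 * Δ3 w 1 2 5 * Δ3 w 1 3 5 * Δ3 w 1 4 5 * Δ3 w 2 3 4 * Δ3 w 2 3 5 * Δ3 w 2 4 5 * Δ3 w 3 4 5)) := by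
    rw [eq_div_iff hM]
    field_simp
  have hB : D * Δ3 w 1 2 4 * (D * Δ3 w 0 1 2 * (D * Δ3 w 0 1 4) * (D * Δ3 w 0 3 5) * (D * Δ3 w 1 2 3) * (D * Δ3 w 1 4 5) * (D * Δ3 w 2 3 4) * (D * Δ3 w 2 4 5))⁻¹ = (D * Δ3 w 1 2 4 * (Δ3 w 0 1 5 * Δ3 w 0 4 5 * Δ3 w 1 2 4 * Δ3 w 1 2 5 * Δ3 w 1 3 5 * Δ3 w 2 3 5 * Δ3 w 3 4 5)) / (D ^ 7 * (Δ3 w 0 1 2 * Δ3 w 0 1 4 * Δ3 w 0 1 5 * Δ3 w 0 3 5 * Δ3 w 0 4 5 * Δ3 w 1 2 3 * Δ3 w 1 2 4 * Δ3 w 1 2 5 * Δ3 w 1 3 5 * Δ3 w 1 4 5 * Δ3 w 2 3 4 * Δ3 w 2 3 5 * Δ3 w 2 4 5 * Δ3 w 3 4 5)) := by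
    rw [eq_div_iff hM]
    field_simp
  have hC : (D * Δ3 w 0 1 2 * (D * Δ3 w 0 1 4) * (D * Δ3 w 0 3 5) * (D * Δ3 w 1 2 3) * (D * Δ3 w 2 4 5) * (D * Δ3 w 3 4 5))⁻¹ = (D * (Δ3 w 0 1 5 * Δ3 w 0 4 5 * Δ3 w 1 2 4 * Δ3 w 1 2 5 * Δ3 w 1 3 5 * Δ3 w 1 4 5 * Δ3 w 2 3 4 * Δ3 w 2 3 5)) / (D ^ 7 * (Δ3 w 0 1 2 * Δ3 w 0 1 4 * Δ3 w 0 1 5 * Δ3 w 0 3 5 * Δ3 w 0 4 5 * Δ3 w 1 2 3 * Δ3 w 1 2 4 * Δ3 w 1 2 5 * Δ3 w 1 3 5 * Δ3 w 1 4 5 * Δ3 w 2 3 4 * Δ3 w 2 3 5 * Δ3 w 2 4 5 * Δ3 w 3 4 5)) := by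
    rw [eq_div_iff hM]
    field_simp
  have hD2 : (D * Δ3 w 0 1 2 * (D * Δ3 w 0 1 4) * (D * Δ3 w 0 4 5) * (D * Δ3 w 1 2 3) * (D * Δ3 w 2 3 5) * (D * Δ3 w 3 4 5))⁻¹ = (D * (Δ3 w 0 1 5 * Δ3 w 0 3 5 * Δ3 w 1 2 4 * Δ3 w 1 2 5 * Δ3 w 1 3 5 * Δ3 w 1 4 5 * Δ3 w 2 3 4 * Δ3 w 2 4 5)) / (D ^ 7 * (Δ3 w 0 1 2 * Δ3 w 0 1 4 * Δ3 w 0 1 5 * Δ3 w 0 3 5 * Δ3 w 0 4 5 * Δ3 w 1 2 3 * Δ3 w 1 2 4 * Δ3 w 1 2 5 * Δ3 w 1 3 5 * Δ3 w 1 4 5 * Δ3 w 2 3 4 * Δ3 w 2 3 5 * Δ3 w 2 4 5 * Δ3 w 3 4 5)) := by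
    rw [eq_div_iff hM]
    field_simp
  have hE : (D * Δ3 w 0 1 2 * (D * Δ3 w 0 1 4) * (D * Δ3 w 0 4 5) * (D * Δ3 w 1 3 5) * (D * Δ3 w 2 3 4) * (D * Δ3 w 2 3 5))⁻¹ = (D * (Δ3 w 0 1 5 * Δ3 w 0 3 5 * Δ3 w 1 2 3 * Δ3 w 1 2 4 * Δ3 w 1 2 5 * Δ3 w 1 4 5 * Δ3 w 2 4 5 * Δ3 w 3 4 5)) / (D ^ 7 * (Δ3 w 0 1 2 * Δ3 w 0 1 4 * Δ3 w 0 1 5 * Δ3 w 0 3 5 * Δ3 w 0 4 5 * Δ3 w 1 2 3 * Δ3 w 1 2 4 * Δ3 w 1 2 5 * Δ3 w 1 3 5 * Δ3 w 1 4 5 * Δ3 w 2 3 4 * Δ3 w 2 3 5 * Δ3 w 2 4 5 * Δ3 w 3 4 5)) := by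
    rw [eq_div_iff hM]
    field_simp
  have hF : D * Δ3 w 0 1 5 * (D * Δ3 w 0 1 2 * (D * Δ3 w 0 1 4) * (D * Δ3 w 0 3 5) * (D * Δ3 w 0 4 5) * (D * Δ3 w 1 2 5) * (D * Δ3 w 1 3 5) * (D * Δ3 w 2 3 4))⁻¹ = (D * Δ3 w 0 1 5 * (Δ3 w 0 1 5 * Δ3 w 1 2 3 * Δ3 w 1 2 4 * Δ3 w 1 4 5 * Δ3 w 2 3 5 * Δ3 w 2 4 5 * Δ3 w 3 4 5)) / (D ^ 7 * (Δ3 w 0 1 2 * Δ3 w 0 1 4 * Δ3 w 0 1 5 * Δ3 w 0 3 5 * Δ3 w 0 4 5 * Δ3 w 1 2 3 * Δ3 w 1 2 4 * Δ3 w 1 2 5 * Δ3 w 1 3 5 * Δ3 w 1 4 5 * Δ3 w 2 3 4 * Δ3 w 2 3 5 * Δ3 w 2 4 5 * Δ3 w 3 4 5)) := by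
    rw [eq_div_iff hM]
    field_simp
  have hG : (D * Δ3 w 0 1 4 * (D * Δ3 w 0 3 5) * (D * Δ3 w 0 4 5) * (D * Δ3 w 1 2 3) * (D * Δ3 w 1 2 5) * (D * Δ3 w 2 3 4))⁻¹ = (D * (Δ3 w 0 1 2 * Δ3 w 0 1 5 * Δ3 w 1 2 4 * Δ3 w 1 3 5 * Δ3 w 1 4 5 * Δ3 w 2 3 5 * Δ3 w 2 4 5 * Δ3 w 3 4 5)) / (D ^ 7 * (Δ3 w 0 1 2 * Δ3 w 0 1 4 * Δ3 w 0 1 5 * Δ3 w 0 3 5 * Δ3 w 0 4 5 * Δ3 w 1 2 3 * Δ3 w 1 2 4 * Δ3 w 1 2 5 * Δ3 w 1 3 5 * Δ3 w 1 4 5 * Δ3 w 2 3 4 * Δ3 w 2 3 5 * Δ3 w 2 4 5 * Δ3 w 3 4 5)) := by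
    rw [eq_div_iff hM]
    field_simp
  have hsum : (-(D * (Δ3 w 0 1 4 * Δ3 w 0 1 5 * Δ3 w 1 2 4 * Δ3 w 1 2 5 * Δ3 w 1 3 5 * Δ3 w 2 3 5 * Δ3 w 2 4 5 * Δ3 w 3 4 5)) - (D * Δ3 w 1 2 4 * (Δ3 w 0 1 5 * Δ3 w 0 4 5 * Δ3 w 1 2 4 * Δ3 w 1 2 5 * Δ3 w 1 3 5 * Δ3 w 2 3 5 * Δ3 w 3 4 5)) - (D * (Δ3 w 0 1 5 * Δ3 w 0 4 5 * Δ3 w 1 2 4 * Δ3 w 1 2 5 * Δ3 w 1 3 5 * Δ3 w 1 4 5 * Δ3 w 2 3 4 * Δ3 w 2 3 5)) + (D * (Δ3 w 0 1 5 * Δ3 w 0 3 5 * Δ3 w 1 2 4 * Δ3 w 1 2 5 * Δ3 w 1 3 5 * Δ3 w 1 4 5 * Δ3 w 2 3 4 * Δ3 w 2 4 5)) + (D * (Δ3 w 0 1 5 * Δ3 w 0 3 5 * Δ3 w 1 2 3 * Δ3 w 1 2 4 * Δ3 w 1 2 5 * Δ3 w 1 4 5 * Δ3 w 2 4 5 *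 Δ3 w 3 4 5)) + (D * Δ3 w 0 1 5 * (Δ3 w 0 1 5 * Δ3 w 1 2 3 * Δ3 w 1 2 4 * Δ3 w 1 4 5 * Δ3 w 2 3 5 * Δ3 w 2 4 5 * Δ3 w 3 4 5)) + (D * (Δ3 w 0 1 2 * Δ3 w 0 1 5 * Δ3 w 1 2 4 * Δ3 w 1 3 5 * Δ3 w 1 4 5 * Δ3 w 2 3 5 * Δ3 w 2 4 5 * Δ3 w 3 4 5))) = 0 := by
    simp only [Δ3, Matrix.det_fin_three, Matrix.of_apply, Matrix.cons_val', Matrix.cons_val_zero, Matrix.cons_val_one, Matrix.head_cons, Matrix.cons_val_two, Matrix.tail_cons, Matrix.empty_val', Matrix.cons_val_fin_one, Matrix.head_fin_const, h0, h1, h2]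
    ring
  rw [hA, hB, hC, hD2, hE, hF, hG]
  rw [show -((D * (Δ3 w 0 1 4 * Δ3 w 0 1 5 * Δ3 w 1 2 4 * Δ3 w 1 2 5 * Δ3 w 1 3 5 * Δ3 w 2 3 5 * Δ3 w 2 4 5 * Δ3 w 3 4 5)) / (D ^ 7 * (Δ3 w 0 1 2 * Δ3 w 0 1 4 * Δ3 w 0 1 5 * Δ3 w 0 3 5 * Δ3 w 0 4 5 * Δ3 w 1 2 3 * Δ3 w 1 2 4 * Δ3 w 1 2 5 * Δ3 w 1 3 5 * Δ3 w 1 4 5 * Δ3 w 2 3 4 * Δ3 w 2 3 5 * Δ3 w 2 4 5 * Δ3 w 3 4 5))) - (D * Δ3 w 1 2 4 * (Δ3 w 0 1 5 * Δ3 w 0 4 5 * Δ3 w 1 2 4 * Δ3 w 1 2 5 * Δ3 w 1 3 5 * Δ3 w 2 3 5 * Δ3 w 3 4 5)) / (D ^ 7 * (Δ3 w 0 1 2 * Δ3 w 0 1 4 * Δ3 w 0 1 5 * Δ3 w 0 3 5 * Δ3 w 0 4 5 * Δ3 w 1 2 3 * Δ3 w 1 2 4 * Δ3 w 1 2 5 *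 Δ3 w 1 3 5 * Δ3 w 1 4 5 * Δ3 w 2 3 4 * Δ3 w 2 3 5 * Δ3 w 2 4 5 * Δ3 w 3 4 5)) - (D * (Δ3 w 0 1 5 * Δ3 w 0 4 5 * Δ3 w 1 2 4 * Δ3 w 1 2 5 * Δ3 w 1 3 5 * Δ3 w 1 4 5 * Δ3 w 2 3 4 * Δ3 w 2 3 5)) / (D ^ 7 * (Δ3 w 0 1 2 * Δ3 w 0 1 4 * Δ3 w 0 1 5 * Δ3 w 0 3 5 * Δ3 w 0 4 5 * Δ3 w 1 2 3 * Δ3 w 1 2 4 * Δ3 w 1 2 5 * Δ3 w 1 3 5 * Δ3 w 1 4 5 * Δ3 w 2 3 4 * Δ3 w 2 3 5 * Δ3 w 2 4 5 * Δ3 w 3 4 5)) + (D * (Δ3 w 0 1 5 * Δ3 w 0 3 5 * Δ3 w 1 2 4 * Δ3 w 1 2 5 * Δ3 w 1 3 5 * Δ3 w 1 4 5 * Δ3 w 2 3 4 * Δ3 w 2 4 5)) / (D ^ 7 * (Δ3 w 0 1 2 * Δ3 w 0 1 4 * Δ3 w 0 1 5 * Δ3 w 0 3 5 * Δ3 w 0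 4 5 * Δ3 w 1 2 3 * Δ3 w 1 2 4 * Δ3 w 1 2 5 * Δ3 w 1 3 5 * Δ3 w 1 4 5 * Δ3 w 2 3 4 * Δ3 w 2 3 5 * Δ3 w 2 4 5 * Δ3 w 3 4 5)) + (D * (Δ3 w 0 1 5 * Δ3 w 0 3 5 * Δ3 w 1 2 3 * Δ3 w 1 2 4 * Δ3 w 1 2 5 * Δ3 w 1 4 5 * Δ3 w 2 4 5 * Δ3 w 3 4 5)) / (D ^ 7 * (Δ3 w 0 1 2 * Δ3 w 0 1 4 * Δ3 w 0 1 5 * Δ3 w 0 3 5 * Δ3 w 0 4 5 * Δ3 w 1 2 3 * Δ3 w 1 2 4 * Δ3 w 1 2 5 * Δ3 w 1 3 5 * Δ3 w 1 4 5 * Δ3 w 2 3 4 * Δ3 w 2 3 5 * Δ3 w 2 4 5 * Δ3 w 3 4 5)) + (D * Δ3 w 0 1 5 * (Δ3 w 0 1 5 * Δ3 w 1 2 3 * Δ3 w 1 2 4 * Δ3 w 1 4 5 * Δ3 w 2 3 5 * Δ3 w 2 4 5 * Δ3 w 3 4 5)) / (D ^ 7 * (Δ3 w 0 1 2 * Δ3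 w 0 1 4 * Δ3 w 0 1 5 * Δ3 w 0 3 5 * Δ3 w 0 4 5 * Δ3 w 1 2 3 * Δ3 w 1 2 4 * Δ3 w 1 2 5 * Δ3 w 1 3 5 * Δ3 w 1 4 5 * Δ3 w 2 3 4 * Δ3 w 2 3 5 * Δ3 w 2 4 5 * Δ3 w 3 4 5)) + (D * (Δ3 w 0 1 2 * Δ3 w 0 1 5 * Δ3 w 1 2 4 * Δ3 w 1 3 5 * Δ3 w 1 4 5 * Δ3 w 2 3 5 * Δ3 w 2 4 5 * Δ3 w 3 4 5)) / (D ^ 7 * (Δ3 w 0 1 2 * Δ3 w 0 1 4 * Δ3 w 0 1 5 * Δ3 w 0 3 5 * Δ3 w 0 4 5 * Δ3 w 1 2 3 * Δ3 w 1 2 4 * Δ3 w 1 2 5 * Δ3 w 1 3 5 * Δ3 w 1 4 5 * Δ3 w 2 3 4 * Δ3 w 2 3 5 * Δ3 w 2 4 5 * Δ3 w 3 4 5)) = (-(D * (Δ3 w 0 1 4 * Δ3 w 0 1 5 * Δ3 w 1 2 4 * Δ3 w 1 2 5 * Δ3 w 1 3 5 * Δ3 w 2 3 5 * Δ3 w 2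 4 5 * Δ3 w 3 4 5)) - (D * Δ3 w 1 2 4 * (Δ3 w 0 1 5 * Δ3 w 0 4 5 * Δ3 w 1 2 4 * Δ3 w 1 2 5 * Δ3 w 1 3 5 * Δ3 w 2 3 5 * Δ3 w 3 4 5)) - (D * (Δ3 w 0 1 5 * Δ3 w 0 4 5 * Δ3 w 1 2 4 * Δ3 w 1 2 5 * Δ3 w 1 3 5 * Δ3 w 1 4 5 * Δ3 w 2 3 4 * Δ3 w 2 3 5)) + (D * (Δ3 w 0 1 5 * Δ3 w 0 3 5 * Δ3 w 1 2 4 * Δ3 w 1 2 5 * Δ3 w 1 3 5 * Δ3 w 1 4 5 * Δ3 w 2 3 4 * Δ3 w 2 4 5)) + (D * (Δ3 w 0 1 5 * Δ3 w 0 3 5 * Δ3 w 1 2 3 * Δ3 w 1 2 4 * Δ3 w 1 2 5 * Δ3 w 1 4 5 * Δ3 w 2 4 5 * Δ3 w 3 4 5)) + (D * Δ3 w 0 1 5 * (Δ3 w 0 1 5 * Δ3 w 1 2 3 * Δ3 w 1 2 4 * Δ3 w 1 4 5 * Δ3 w 2 3 5 * Δ3 w 2 4 5 * Δ3 w 3 4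 5)) + (D * (Δ3 w 0 1 2 * Δ3 w 0 1 5 * Δ3 w 1 2 4 * Δ3 w 1 3 5 * Δ3 w 1 4 5 * Δ3 w 2 3 5 * Δ3 w 2 4 5 * Δ3 w 3 4 5))) / (D ^ 7 * (Δ3 w 0 1 2 * Δ3 w 0 1 4 * Δ3 w 0 1 5 * Δ3 w 0 3 5 * Δ3 w 0 4 5 * Δ3 w 1 2 3 * Δ3 w 1 2 4 * Δ3 w 1 2 5 * Δ3 w 1 3 5 * Δ3 w 1 4 5 * Δ3 w 2 3 4 * Δ3 w 2 3 5 * Δ3 w 2 4 5 * Δ3 w 3 4 5)) from by ring]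
  rw [hsum, zero_div]

theorem stmt12 {F : Type*} [Field F] (v : Fin 6 → Fin 3 → F)
    (hΔ : ∀ a b c : Fin 6, a ≠ b → a ≠ c → b ≠ c → Δ3 v a b c ≠ 0) :
    -(Δ3 v 0 1 2 * Δ3 v 0 3 5 * Δ3 v 0 4 5 * Δ3 v 1 2 3 * Δ3 v 1 4 5 * Δ3 v 2 3 4)⁻¹
      - Δ3 v 1 2 4 * (Δ3 v 0 1 2 * Δ3 v 0 1 4 * Δ3 v 0 3 5 * Δ3 v 1 2 3 * Δ3 v 1 4 5 *
          Δ3 v 2 3 4 * Δ3 v 2 4 5)⁻¹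
      - (Δ3 v 0 1 2 * Δ3 v 0 1 4 * Δ3 v 0 3 5 * Δ3 v 1 2 3 * Δ3 v 2 4 5 * Δ3 v 3 4 5)⁻¹
      + (Δ3 v 0 1 2 * Δ3 v 0 1 4 * Δ3 v 0 4 5 * Δ3 v 1 2 3 * Δ3 v 2 3 5 * Δ3 v 3 4 5)⁻¹
      + (Δ3 v 0 1 2 * Δ3 v 0 1 4 * Δ3 v 0 4 5 * Δ3 v 1 3 5 * Δ3 v 2 3 4 * Δ3 v 2 3 5)⁻¹
      + Δ3 v 0 1 5 * (Δ3 v 0 1 2 * Δ3 v 0 1 4 * Δ3 v 0 3 5 * Δ3 v 0 4 5 * Δ3 v 1 2 5 *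
          Δ3 v 1 3 5 * Δ3 v 2 3 4)⁻¹
      + (Δ3 v 0 1 4 * Δ3 v 0 3 5 * Δ3 v 0 4 5 * Δ3 v 1 2 3 * Δ3 v 1 2 5 * Δ3 v 2 3 4)⁻¹
      = 0 := by
  have h012 := hΔ 0 1 2 (by decide) (by decide) (by decide)
  set M : Matrix (Fin 3) (Fin 3) F := Matrix.of fun i j => ![v 0, v 1, v 2] j i with hMdef
  have hdet : M.det ≠ 0 := h012
  have hU : IsUnit M.det := hdet.isUnit
  set w : Fin 6 → Fin 3 → F := fun k => M⁻¹.mulVec (v k) with hwdef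
  have hv : ∀ k, v k = M.mulVec (w k) := by
    intro k
    rw [hwdef, Matrix.mulVec_mulVec, Matrix.mul_nonsing_inv _ hU, Matrix.one_mulVec]
  have hsc : ∀ a b c : Fin 6, Δ3 v a b c = M.det * Δ3 w a b c := by
    intro a b c
    have hmat : (Matrix.of fun i j => ![v a, v b, v c] j i) =
        M * (Matrix.of fun i j => ![w a, w b, w c] j i) := by
      ext i j
      fin_cases j <;>
        simp [hv a, hv b, hv c, Matrix.mul_apply, Matrix.mulVec, dotProduct, Fin.sum_univ_three]
    show Matrix.det _ = _ * Matrix.det _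
    rw [hmat, Matrix.det_mul]
  have hΔw : ∀ a b c : Fin 6, a ≠ b → a ≠ c → b ≠ c → Δ3 w a b c ≠ 0 := by
    intro a b c hab hac hbc hzero
    exact hΔ a b c hab hac hbc (by rw [hsc, hzero, mul_zero])
  have hb0 : M.mulVec ![1,0,0] = v 0 := by
    funext i
    simp [Matrix.mulVec, dotProduct, Fin.sum_univ_three, hMdef]
  have hb1 : M.mulVec ![0,1,0] = v 1 := by
    funext i
    simp [Matrix.mulVec, dotProduct, Fin.sum_univ_three, hMdef]
  have hb2 : M.mulVec ![0,0,1] = v 2 := by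
    funext i
    simp [Matrix.mulVec, dotProduct, Fin.sum_univ_three, hMdef]
  have h0 : w 0 = ![1,0,0] := by
    show M⁻¹.mulVec (v 0) = _
    rw [← hb0, Matrix.mulVec_mulVec, Matrix.nonsing_inv_mul _ hU, Matrix.one_mulVec]
  have h1 : w 1 = ![0,1,0] := by
    show M⁻¹.mulVec (v 1) = _
    rw [← hb1, Matrix.mulVec_mulVec, Matrix.nonsing_inv_mul _ hU, Matrix.one_mulVec]
  have h2 : w 2 = ![0,0,1] := by
    show M⁻¹.mulVec (v 2) = _
    rw [← hb2, Matrix.mulVec_mulVec, Matrix.nonsing_inv_mul _ hU, Matrix.one_mulVec]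
  simp only [hsc]
  exact aux312 M.det hdet w h0 h1 h2 hΔw
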